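/- (Rate–critical-frequency relation for the triangular PSD.) Fix f_B > 0 and let S_Λ(f) := (1/f_B)·max(0, 1 − |f|/f_B). For every θ with 0 < θ < 1/f_B, the waterfilling rate satisfies ½ ∫_ℝ log₂⁺(S_Λ(f)/θ) df = f_B · log₂(1/(f_B θ)) − f_B (1 − f_B θ)/ln 2. Equivalently, with f_DR := 2 f_B (1 − f_B θ) (the measure of {S_Λ > θ}), the rate R at which the critical sampling frequency equals f_DR is R = f_B · log₂(2 f_B / (2 f_B − f_DR)) − f_DR/(2 ln 2). -/

import Mathlib

open MeasureTheory

/-- Rate–critical-frequency relation for the triangular PSD: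
`½ ∫ log₂⁺(S_Λ/θ) = f_B log₂(1/(f_B θ)) - f_B (1 - f_B θ)/ln 2`, and equivalently,
with `f_DR = 2 f_B (1 - f_B θ)`,
`R = f_B log₂(2 f_B/(2 f_B - f_DR)) - f_DR/(2 ln 2)`. -/
theorem triangular_psd_rate_critical_frequency
    (f_B : ℝ) (hfB : 0 < f_B) (S : ℝ → ℝ)
    (hS : ∀ f, S f = (1 / f_B) * max 0 (1 - |f| / f_B))
    (θ : ℝ) (hθ0 : 0 < θ) (hθ1 : θ < 1 / f_B) :
    ((1 / 2) * (∫ f, max (Real.logb 2 (S f / θ)) 0)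
      = f_B * Real.logb 2 (1 / (f_B * θ)) - f_B * (1 - f_B * θ) / Real.log 2) ∧
    ((1 / 2) * (∫ f, max (Real.logb 2 (S f / θ)) 0)
      = f_B * Real.logb 2 (2 * f_B / (2 * f_B - 2 * f_B * (1 - f_B * θ)))
        - 2 * f_B * (1 - f_B * θ) / (2 * Real.log 2)) := by
  have hlog2 : 0 < Real.log 2 := Real.log_pos one_lt_two
  set c : ℝ := f_B * θ with hc
  have hc0 : 0 < c := mul_pos hfB hθ0
  have hc1 : c < 1 := by
    have h := (mul_lt_mul_of_pos_left hθ1 hfB)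
    rwa [mul_one_div, div_self hfB.ne'] at h
  set a : ℝ := f_B * (1 - c) with ha
  have ha0 : 0 < a := mul_pos hfB (by linarith)
  have hafB : a / f_B = 1 - c := by field_simp [ha]; exact ha
  have hfBa : f_B - a = f_B * c := by rw [ha]; ring
  have hfBc : 0 < f_B * c := mul_pos hfB hc0
  -- pointwise identity
  have key : (fun f => max (Real.logb 2 (S f / θ)) 0)
      = Set.indicator (Set.Icc (-a) a)
          (fun f => Real.logb 2 ((1 - |f| / f_B) / c)) := by
    funext f
    by_cases hf : f ∈ Set.Icc (-a) a
    · have habs : |f| ≤ a := abs_le.2 ⟨hf.1, hf.2⟩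
      have h1 : c ≤ 1 - |f| / f_B := by
        have : |f| / f_B ≤ a / f_B := (div_le_div_iff_of_pos_right hfB).2 habs
        rw [hafB] at this; linarith
      have hpos : (0:ℝ) ≤ 1 - |f| / f_B := le_trans hc0.le h1
      have hSf : S f / θ = (1 - |f| / f_B) / c := by
        rw [hS f, max_eq_right hpos, hc, one_div_mul_eq_div, div_div]
      have hge1 : (1:ℝ) ≤ S f / θ := by
        rw [hSf, le_div_iff₀ hc0]; linarith
      rw [Set.indicator_of_mem hf, ← hSf,
        max_eq_left (Real.logb_nonneg one_lt_two hge1)]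
    · have habs : a < |f| := by
        by_contra hcon
        push_neg at hcon
        exact hf (Set.mem_Icc.2 (abs_le.1 hcon))
      have h1 : 1 - |f| / f_B < c := by
        have : a / f_B < |f| / f_B := (div_lt_div_iff_of_pos_right hfB).2 habs
        rw [hafB] at this; linarith
      have hSle : S f ≤ θ := by
        rw [hS f]
        have hmax : max 0 (1 - |f| / f_B) ≤ c := max_le hc0.le h1.le
        calc (1 / f_B) * max 0 (1 - |f| / f_B) ≤ (1 / f_B) * c := by
              exact mul_le_mul_of_nonneg_left hmax (by positivity)
        _ = θ := by rw [hc]; field_simp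
      have hS0 : 0 ≤ S f := by
        rw [hS f]; positivity
      have hle1 : S f / θ ≤ 1 := (div_le_one hθ0).2 hSle
      rw [Set.indicator_of_notMem hf,
        max_eq_right (Real.logb_nonpos one_lt_two (by positivity) hle1)]
  rw [key]
  -- turn into an interval integral
  rw [integral_indicator measurableSet_Icc, integral_Icc_eq_integral_Ioc,
    ← intervalIntegral.integral_of_le (by linarith : -a ≤ a)]
  -- rewrite the integrand on [-a, a]
  have hposOn : ∀ x ∈ Set.Icc (-a) a, (0:ℝ) < 1 - |x| / f_B := by
    intro x hx
    have habs : |x| ≤ a := abs_le.2 ⟨hx.1, hx.2⟩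
    have : |x| / f_B ≤ a / f_B := (div_le_div_iff_of_pos_right hfB).2 habs
    rw [hafB] at this; linarith
  have hcongr : (∫ x in (-a)..a, Real.logb 2 ((1 - |x| / f_B) / c))
      = ∫ x in (-a)..a, (Real.log (1 - |x| / f_B) - Real.log c) / Real.log 2 := by
    apply intervalIntegral.integral_congr
    intro x hx
    rw [Set.uIcc_of_le (by linarith : -a ≤ a)] at hx
    simp only [Real.logb, Real.log_div (hposOn x hx).ne' hc0.ne']
  rw [hcongr]
  -- integrability facts
  have hcont : ContinuousOn (fun x : ℝ => Real.log (1 - |x| / f_B)) (Set.Icc (-a) a) := by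
    apply ContinuousOn.log
    · exact (continuous_const.sub (continuous_abs.div_const f_B)).continuousOn
    · intro x hx; exact (hposOn x hx).ne'
  have hint : IntervalIntegrable (fun x : ℝ => Real.log (1 - |x| / f_B))
      volume (-a) a := by
    apply ContinuousOn.intervalIntegrable
    rwa [Set.uIcc_of_le (by linarith : -a ≤ a)]
  -- split off the constant and the division
  have hsplit : (∫ x in (-a)..a, (Real.log (1 - |x| / f_B) - Real.log c) / Real.log 2)
      = ((∫ x in (-a)..a, Real.log (1 - |x| / f_B)) - (2 * a) * Real.log c)
          / Real.log 2 := by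
    rw [intervalIntegral.integral_div,
      intervalIntegral.integral_sub hint
        (intervalIntegrable_const (c := Real.log c)),
      intervalIntegral.integral_const]
    simp only [smul_eq_mul, sub_neg_eq_add]
    try ring
  rw [hsplit]
  -- compute the main integral by symmetry
  have hhalf : ∀ x ∈ Set.uIcc (0:ℝ) a, (0:ℝ) < 1 - x / f_B := by
    intro x hx
    rw [Set.uIcc_of_le ha0.le] at hx
    have : x / f_B ≤ a / f_B := (div_le_div_iff_of_pos_right hfB).2 hx.2
    rw [hafB] at this; linarith
  have hJ : (∫ x in (0:ℝ)..a, Real.log (1 - x / f_B))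
      = f_B * Real.log f_B - (f_B * c) * Real.log (f_B * c) - f_B + f_B * c
          - a * Real.log f_B := by
    have h1 : (∫ x in (0:ℝ)..a, Real.log (1 - x / f_B))
        = ∫ x in (0:ℝ)..a, (Real.log (f_B - x) - Real.log f_B) := by
      apply intervalIntegral.integral_congr
      intro x hx
      have hp := hhalf x hx
      show Real.log (1 - x / f_B) = Real.log (f_B - x) - Real.log f_B
      have h3 : 1 - x / f_B = (f_B - x) / f_B := by field_simp
      have hpx : 0 < f_B - x := by
        rw [h3] at hp
        have h2 := mul_pos hp hfB
        rwa [div_mul_cancel₀ _ hfB.ne'] at h2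
      rw [h3, Real.log_div hpx.ne' hfB.ne']
    have hint2 : IntervalIntegrable (fun x : ℝ => Real.log (f_B - x)) volume 0 a := by
      apply ContinuousOn.intervalIntegrable
      apply ContinuousOn.log
      · exact (continuous_const.sub continuous_id).continuousOn
      · intro x hx
        have hp := hhalf x hx
        have : 1 - x / f_B = (f_B - x) / f_B := by field_simp
        rw [this] at hp
        have := (div_pos_iff.1 hp)
        rcases this with ⟨h, _⟩ | ⟨_, h⟩
        · exact h.ne'
        · linarith
    rw [h1, intervalIntegral.integral_sub hint2
        (intervalIntegrable_const (c := Real.log f_B)),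
      intervalIntegral.integral_const,
      intervalIntegral.integral_comp_sub_left (fun y => Real.log y) f_B]
    rw [integral_log]
    rw [hfBa]
    simp only [smul_eq_mul, sub_zero]
    try ring
  have hI : (∫ x in (-a)..a, Real.log (1 - |x| / f_B))
      = 2 * (∫ x in (0:ℝ)..a, Real.log (1 - x / f_B)) := by
    have hintL : IntervalIntegrable (fun x : ℝ => Real.log (1 - |x| / f_B))
        volume (-a) 0 := hint.mono_set (by
          rw [Set.uIcc_of_le (by linarith : -a ≤ (0:ℝ)),
            Set.uIcc_of_le (by linarith : -a ≤ a)]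
          exact Set.Icc_subset_Icc le_rfl ha0.le)
    have hintR : IntervalIntegrable (fun x : ℝ => Real.log (1 - |x| / f_B))
        volume 0 a := hint.mono_set (by
          rw [Set.uIcc_of_le ha0.le, Set.uIcc_of_le (by linarith : -a ≤ a)]
          exact Set.Icc_subset_Icc (by linarith) le_rfl)
    rw [← intervalIntegral.integral_add_adjacent_intervals hintL hintR]
    have hL : (∫ x in (-a)..(0:ℝ), Real.log (1 - |x| / f_B))
        = ∫ x in (0:ℝ)..a, Real.log (1 - x / f_B) := by
      have h1 : (∫ x in (-a)..(0:ℝ), Real.log (1 - |x| / f_B))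
          = ∫ x in (-a)..(0:ℝ), Real.log (1 - (-x) / f_B) := by
        apply intervalIntegral.integral_congr
        intro x hx
        rw [Set.uIcc_of_le (by linarith : -a ≤ (0:ℝ))] at hx
        show Real.log (1 - |x| / f_B) = Real.log (1 - (-x) / f_B)
        rw [abs_of_nonpos hx.2]
      rw [h1, intervalIntegral.integral_comp_neg (fun y => Real.log (1 - y / f_B))]
      norm_num
    have hR : (∫ x in (0:ℝ)..a, Real.log (1 - |x| / f_B))
        = ∫ x in (0:ℝ)..a, Real.log (1 - x / f_B) := by
      apply intervalIntegral.integral_congr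
      intro x hx
      rw [Set.uIcc_of_le ha0.le] at hx
      show Real.log (1 - |x| / f_B) = Real.log (1 - x / f_B)
      rw [abs_of_nonneg hx.1]
    rw [hL, hR]; ring
  rw [hI, hJ]
  -- final arithmetic
  have hlogb1 : Real.logb 2 (1 / (f_B * θ)) = - Real.log c / Real.log 2 := by
    rw [Real.logb, one_div, Real.log_inv, hc]
  have hlogmul : Real.log (f_B * c) = Real.log f_B + Real.log c :=
    Real.log_mul hfB.ne' hc0.ne'
  constructor
  · rw [hlogb1, hlogmul, ha]
    field_simp
    ring
  · have harg : 2 * f_B / (2 * f_B - 2 * f_B * (1 - f_B * θ)) = 1 / (f_B * θ) := by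
      rw [show 2 * f_B - 2 * f_B * (1 - f_B * θ) = 2 * f_B * (f_B * θ) by ring]
      rw [div_mul_eq_div_div, div_self (by positivity : (2:ℝ) * f_B ≠ 0)]
    rw [harg, hlogb1, hlogmul, ha]
    field_simp
    ring
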